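/- The pentagon relation: if ε is the 2×2 integer matrix with ε₁₂ = -1, ε₂₁ = 1 (so ε_{12} = -ε_{21} = -1), then the composition of five cluster mutations μ₁μ₂μ₁μ₂μ₁ (in the convention where subsequent mutations are taken at the images of the vertices) acts on the coordinate torus (x₁,x₂) as the transposition of the two coordinates; in particular the composition of the induced birational maps of the (x₁,x₂)-plane, followed by the coordinate swap, is the identity. -/

import Mathlib

def mutMat {I : Type*} [DecidableEq I] (ε : I → I → ℤ) (k : I) : I → I → ℤ := fun i j =>
  if i = k ∨ j = k then -ε i j
  else if 0 ≤ ε i k then ε i j + ε i k * max 0 (ε k j)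
  else ε i j + ε i k * max 0 (-ε k j)

noncomputable def mutCoord {I : Type*} [DecidableEq I] {K : Type*} [Field K]
    (ε : I → I → ℤ) (k : I) (x : I → K) : I → K := fun i =>
  if i = k then (x k)⁻¹
  else if 0 ≤ ε i k then x i * (1 + x k) ^ (ε i k)
  else x i * (1 + (x k)⁻¹) ^ (ε i k)

noncomputable def mutS {I : Type*} [DecidableEq I] {K : Type*} [Field K] (k : I)
    (s : (I → I → ℤ) × (I → K)) : (I → I → ℤ) × (I → K) :=
  (mutMat s.1 k, mutCoord s.1 k s.2)

noncomputable abbrev K2 : Type := FractionRing (MvPolynomial (Fin 2) ℚ)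

noncomputable def X2 (i : Fin 2) : K2 :=
  algebraMap (MvPolynomial (Fin 2) ℚ) K2 (MvPolynomial.X i)

def εPent : Fin 2 → Fin 2 → ℤ := ![![0, -1], ![1, 0]]

def εP' : Fin 2 → Fin 2 → ℤ := ![![0, 1], ![-1, 0]]

lemma mutMat_pent : mutMat εPent 0 = εP' := by
  funext i j; fin_cases i <;> fin_cases j <;> decide

lemma mutMat_pent' : mutMat εP' 1 = εPent := by
  funext i j; fin_cases i <;> fin_cases j <;> decide

lemma mutS_0 {K : Type*} [Field K] (u v : K) :
    mutS 0 (εPent, ![u, v]) = (εP', ![u⁻¹, v * (1 + u)]) := by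
  refine Prod.ext mutMat_pent ?_
  funext i; fin_cases i <;> simp [mutCoord, mutS, εPent]

lemma mutS_1 {K : Type*} [Field K] (u v : K) :
    mutS 1 (εP', ![u, v]) = (εPent, ![u * (1 + v), v⁻¹]) := by
  refine Prod.ext mutMat_pent' ?_
  funext i; fin_cases i <;> simp [mutCoord, mutS, εP']

lemma vec_congr {K : Type*} [Field K] {u v u' v' : K} (h1 : u = u') (h2 : v = v') :
    (![u, v] : Fin 2 → K) = ![u', v'] := by rw [h1, h2]

lemma key {K : Type*} [Field K] (a b : K) (ha : a ≠ 0) (hb : b ≠ 0)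
    (h1a : (1 : K) + a ≠ 0) (h1b : (1 : K) + b ≠ 0) (hab : (1 : K) + b + a * b ≠ 0) :
    (mutS 0 (mutS 1 (mutS 0 (mutS 1 (mutS 0 (εPent, ![a, b])))))).2 = ![b, a] := by
  have hS : a + (1 + b + a * b) ≠ 0 := by
    have : a + (1 + b + a * b) = (1 + a) * (1 + b) := by ring
    rw [this]; exact mul_ne_zero h1a h1b
  rw [mutS_0, mutS_1,
    vec_congr (u' := a⁻¹ * (1 + b + a * b)) (v' := (b * (1 + a))⁻¹) (by ring) rfl,
    mutS_0, mutS_1 ((a⁻¹ * (1 + b + a * b))⁻¹),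
    vec_congr (u' := b⁻¹) (v' := a * b * (1 + b)⁻¹)
      (by field_simp; ring) (by
        field_simp
        rw [div_eq_one_iff_eq (by rw [mul_comm b a]; exact hS)]
        ring),
    mutS_0,
    vec_congr (u' := b) (v' := a) (by simp)
      (by field_simp; ring)]

lemma mapne (p : MvPolynomial (Fin 2) ℚ) (h : p ≠ 0) :
    algebraMap (MvPolynomial (Fin 2) ℚ) K2 p ≠ 0 := by
  simpa using (IsFractionRing.injective (MvPolynomial (Fin 2) ℚ) K2).ne_iff.mpr h

theorem stmt8 :
    (mutS 0 (mutS 1 (mutS 0 (mutS 1 (mutS 0 (εPent, X2)))))).2 0 = X2 1 ∧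
    (mutS 0 (mutS 1 (mutS 0 (mutS 1 (mutS 0 (εPent, X2)))))).2 1 = X2 0 := by
  have ha : X2 0 ≠ 0 := mapne _ (MvPolynomial.X_ne_zero 0)
  have hb : X2 1 ≠ 0 := mapne _ (MvPolynomial.X_ne_zero 1)
  have h1a : (1 : K2) + X2 0 ≠ 0 := by
    have := mapne (1 + MvPolynomial.X 0) ?_
    · simpa [X2, map_add] using this
    · intro h
      have := congrArg (MvPolynomial.coeff 0) h
      simp [MvPolynomial.coeff_X] at this
  have h1b : (1 : K2) + X2 1 ≠ 0 := by
    have := mapne (1 + MvPolynomial.X 1) ?_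
    · simpa [X2, map_add] using this
    · intro h
      have := congrArg (MvPolynomial.coeff 0) h
      simp [MvPolynomial.coeff_X] at this
  have hab : (1 : K2) + X2 1 + X2 0 * X2 1 ≠ 0 := by
    have := mapne (1 + MvPolynomial.X 1 + MvPolynomial.X 0 * MvPolynomial.X 1) ?_
    · simpa [X2, map_add, map_mul, map_one] using this
    · intro h
      have := congrArg (MvPolynomial.coeff 0) h
      simp [MvPolynomial.coeff_mul, MvPolynomial.coeff_X] at this
  have hX : (X2 : Fin 2 → K2) = ![X2 0, X2 1] := by
    funext i; fin_cases i <;> rfl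
  have e5 := key (X2 0) (X2 1) ha hb h1a h1b hab
  rw [hX, e5]
  exact ⟨rfl, rfl⟩
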